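/- Let B₀ be a p×n matrix and X an m×p matrix, with NB₀ = N U D V' the generalized SVD under metric M = X'X = N'N (U'MU = I_r, V'V = I_r, D diagonal r×r). Let B_k = U_k D_k V_k' retain the k largest generalized singular values. Then ‖XB₀ − XB_k‖_F² = Σ_{j>k} dⱼ²(XB₀). -/

import Mathlib

open Matrix MeasureTheory

/-- List of singular values of a real matrix, sorted in decreasing order
(square roots of the eigenvalues of `Aᵀ * A`). -/
noncomputable def svList {m n : ℕ} (A : Matrix (Fin m) (Fin n) ℝ) : List ℝ :=
  (((List.ofFn (show (Aᵀ * A).IsHermitian by simpa using Matrix.isHermitian_conjTranspose_mul_self A).eigenvalues).map Real.sqrt).mergeSort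
    (fun a b => decide (b ≤ a)))

/-- `sv A k` is the `k`-th largest singular value of `A` (1-indexed); `0` if `k` exceeds
the number of singular values. -/
noncomputable def sv {m n : ℕ} (A : Matrix (Fin m) (Fin n) ℝ) (k : ℕ) : ℝ :=
  (svList A).getD (k - 1) 0

/-- Nuclear norm: sum of the singular values. -/
noncomputable def nuclearNorm {m n : ℕ} (A : Matrix (Fin m) (Fin n) ℝ) : ℝ :=
  (svList A).sum

/-- Squared Frobenius norm. -/
noncomputable def frobSq {m n : ℕ} (A : Matrix (Fin m) (Fin n) ℝ) : ℝ :=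
  ∑ i, ∑ j, (A i j) ^ 2

/-- Frobenius inner product. -/
noncomputable def frobInner {m n : ℕ} (C D : Matrix (Fin m) (Fin n) ℝ) : ℝ :=
  ∑ i, ∑ j, C i j * D i j

section Aux

open Polynomial

lemma my_charpoly_conj {ι R : Type*} [Fintype ι] [DecidableEq ι] [CommRing R]
    (P B Q : Matrix ι ι R) (h1 : P * Q = 1) :
    (P * B * Q).charpoly = B.charpoly := by
  have hPQ : P.map (C : R →+* R[X]) * Q.map C = 1 := by
    rw [← Matrix.map_mul, h1]
    exact Matrix.map_one _ (map_zero C) (map_one C)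
  have key : charmatrix (P * B * Q) = (P.map C) * charmatrix B * (Q.map C) := by
    unfold charmatrix
    rw [RingHom.mapMatrix_apply, RingHom.mapMatrix_apply]
    rw [Matrix.mul_sub, Matrix.sub_mul]
    congr 1
    · rw [Matrix.mul_assoc, (Matrix.scalar_commute (X : R[X]) (fun r' => Commute.all _ _) (Q.map C)).eq,
        ← Matrix.mul_assoc, hPQ, one_mul]
    · rw [← Matrix.map_mul, ← Matrix.map_mul]
  rw [Matrix.charpoly, key, det_mul, det_mul, mul_right_comm, ← det_mul, hPQ, det_one, one_mul]
  rfl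

lemma my_charpoly_diagonal {ι R : Type*} [Fintype ι] [DecidableEq ι] [CommRing R] (v : ι → R) :
    (Matrix.diagonal v).charpoly = ∏ i, (X - C (v i)) := by
  have h : charmatrix (Matrix.diagonal v) = Matrix.diagonal (fun i => X - C (v i)) := by
    ext i j
    by_cases h : i = j
    · subst h; simp
    · simp [charmatrix_apply, Matrix.diagonal_apply_ne _ h]
  rw [Matrix.charpoly, h, det_diagonal]

lemma my_charpoly_mul_comm {q : ℕ} (A B : Matrix (Fin q) (Fin q) ℝ) :
    (A * B).charpoly = (B * A).charpoly := by
  have h1 : (fromBlocks 1 A 0 1 : Matrix (Fin q ⊕ Fin q) (Fin q ⊕ Fin q) ℝ) * fromBlocks 1 (-A) 0 1 = 1 := by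
    rw [fromBlocks_multiply]
    simp [← fromBlocks_one]
  have hconj : (fromBlocks 1 A 0 1 : Matrix (Fin q ⊕ Fin q) (Fin q ⊕ Fin q) ℝ) *
      fromBlocks 0 0 B (B * A) * fromBlocks 1 (-A) 0 1 = fromBlocks (A * B) 0 B 0 := by
    rw [fromBlocks_multiply, fromBlocks_multiply]
    congr 1 <;> simp [Matrix.mul_assoc]
  have h2 := my_charpoly_conj _ (fromBlocks 0 0 B (B * A)) _ h1
  rw [hconj] at h2
  rw [charpoly_fromBlocks_zero₁₂, charpoly_fromBlocks_zero₁₂] at h2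
  have hz : (0 : Matrix (Fin q) (Fin q) ℝ).charpoly = X ^ q := by
    rw [← Matrix.diagonal_zero, my_charpoly_diagonal]
    simp [Finset.prod_const]
  rw [hz, mul_comm] at h2
  exact (mul_left_cancel₀ (pow_ne_zero q (X_ne_zero : (X:ℝ[X]) ≠ 0)) h2)

lemma frobSq_eq_trace {m n : ℕ} (A : Matrix (Fin m) (Fin n) ℝ) :
    frobSq A = (Aᵀ * A).trace := by
  unfold frobSq Matrix.trace
  rw [Finset.sum_comm]
  simp [Matrix.mul_apply, Matrix.diag, sq]

lemma gram_eq {m n p r : ℕ} (X : Matrix (Fin m) (Fin p) ℝ)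
    (U : Matrix (Fin p) (Fin r) ℝ) (V : Matrix (Fin n) (Fin r) ℝ)
    (hU : Uᵀ * (Xᵀ * X) * U = 1) (e : Fin r → ℝ) :
    (X * (U * Matrix.diagonal e * Vᵀ))ᵀ * (X * (U * Matrix.diagonal e * Vᵀ))
      = V * Matrix.diagonal (fun j => e j * e j) * Vᵀ := by
  have hU2 : ∀ W : Matrix (Fin r) (Fin n) ℝ, Uᵀ * (Xᵀ * (X * (U * W))) = W := by
    intro W
    calc Uᵀ * (Xᵀ * (X * (U * W))) = (Uᵀ * (Xᵀ * X) * U) * W := by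
          simp only [Matrix.mul_assoc]
      _ = W := by rw [hU, Matrix.one_mul]
  calc (X * (U * Matrix.diagonal e * Vᵀ))ᵀ * (X * (U * Matrix.diagonal e * Vᵀ))
      = V * (Matrix.diagonal e * (Uᵀ * (Xᵀ * (X * (U * (Matrix.diagonal e * Vᵀ)))))) := by
        simp only [Matrix.transpose_mul, Matrix.diagonal_transpose, Matrix.transpose_transpose,
          Matrix.mul_assoc]
    _ = V * (Matrix.diagonal e * (Matrix.diagonal e * Vᵀ)) := by rw [hU2]
    _ = V * Matrix.diagonal (fun j => e j * e j) * Vᵀ := by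
        rw [← Matrix.mul_assoc, ← Matrix.mul_assoc, Matrix.mul_assoc V, Matrix.diagonal_mul_diagonal]

lemma frob_calc {m n p r : ℕ} (X : Matrix (Fin m) (Fin p) ℝ)
    (U : Matrix (Fin p) (Fin r) ℝ) (V : Matrix (Fin n) (Fin r) ℝ)
    (hU : Uᵀ * (Xᵀ * X) * U = 1) (hV : Vᵀ * V = 1) (e : Fin r → ℝ) :
    frobSq (X * (U * Matrix.diagonal e * Vᵀ)) = ∑ j, e j ^ 2 := by
  rw [frobSq_eq_trace, gram_eq X U V hU e, Matrix.mul_assoc, Matrix.trace_mul_comm,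
    Matrix.mul_assoc, hV, Matrix.mul_one, Matrix.trace_diagonal]
  simp [sq]

noncomputable def Jmat {n r : ℕ} (hrn : r ≤ n) : Matrix (Fin r) (Fin n) ℝ :=
  fun a j => if (Fin.castLE hrn a) = j then 1 else 0

lemma JJT {n r : ℕ} (hrn : r ≤ n) : Jmat hrn * (Jmat hrn)ᵀ = 1 := by
  ext a b
  simp only [Matrix.mul_apply, Jmat, Matrix.transpose_apply, ite_mul, one_mul, zero_mul]
  rw [Finset.sum_ite_eq (Finset.univ : Finset (Fin n)) (Fin.castLE hrn a)
    (fun j => if Fin.castLE hrn b = j then (1:ℝ) else 0)]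
  simp [Matrix.one_apply, Fin.castLE_inj, eq_comm]

lemma JDJ {n r : ℕ} (hrn : r ≤ n) (d : Fin r → ℝ) :
    (Jmat hrn)ᵀ * (Matrix.diagonal (fun a => d a * d a) * Jmat hrn)
      = Matrix.diagonal (fun j : Fin n => if h : (j : ℕ) < r then d ⟨j, h⟩ * d ⟨j, h⟩ else 0) := by
  ext j l
  rw [Matrix.mul_apply]
  simp only [Matrix.transpose_apply, Matrix.diagonal_mul, Jmat, ite_mul, one_mul, zero_mul,
    mul_ite, mul_one, mul_zero]
  by_cases h : (j : ℕ) < r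
  · rw [Finset.sum_eq_single (⟨(j : ℕ), h⟩ : Fin r)]
    · have h1 : (Fin.castLE hrn ⟨(j : ℕ), h⟩ = j) := by
        apply Fin.ext; simp
      have h2 : (Fin.castLE hrn ⟨(j : ℕ), h⟩ = l) ↔ (j = l) := by
        rw [Fin.ext_iff, Fin.ext_iff]; simp
      simp only [Matrix.diagonal_apply, dif_pos h, h1, h2]
      by_cases hl : j = l <;> simp [hl]
    · intro b _ hb
      have hbj : ¬ (Fin.castLE hrn b = j) :=
        fun hc => hb (Fin.ext (by simpa using congrArg Fin.val hc))
      simp [hbj]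
    · intro hmem
      exact absurd (Finset.mem_univ _) hmem
  · rw [Finset.sum_eq_zero, Matrix.diagonal_apply]
    · rw [dif_neg h]
      simp
    · intro a _
      have haj : ¬ (Fin.castLE hrn a = j) := by
        intro hc
        apply h
        rw [← hc]
        simpa using a.isLt
      simp [haj]

lemma roots_eq_of_charpoly {n : ℕ} (f g : Fin n → ℝ)
    (h : (Matrix.diagonal f).charpoly = (Matrix.diagonal g).charpoly) :
    (Finset.univ.val.map f) = (Finset.univ.val.map g) := by
  rw [my_charpoly_diagonal, my_charpoly_diagonal] at h
  have key : ∀ u : Fin n → ℝ, (∏ i, (X - C (u i))) =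
      (Multiset.map (fun a => X - C a) (Finset.univ.val.map u)).prod := by
    intro u
    rw [Multiset.map_map, Finset.prod]
    rfl
  rw [key f, key g] at h
  have := congrArg Polynomial.roots h
  rwa [roots_multiset_prod_X_sub_C, roots_multiset_prod_X_sub_C] at this

lemma svList_eq_of {m n : ℕ} (A : Matrix (Fin m) (Fin n) ℝ) (g : Fin n → ℝ)
    (hg0 : ∀ j, 0 ≤ g j) (hganti : ∀ i j : Fin n, i ≤ j → g j ≤ g i)
    (hchar : (Aᵀ * A).charpoly = (Matrix.diagonal (fun j => g j * g j)).charpoly) :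
    svList A = List.ofFn g := by
  set hA : (Aᵀ * A).IsHermitian := (by simpa using Matrix.isHermitian_conjTranspose_mul_self A) with hhA
  set eig := hA.eigenvalues with heig
  have hW : star (hA.eigenvectorUnitary : Matrix (Fin n) (Fin n) ℝ) *
      (hA.eigenvectorUnitary : Matrix (Fin n) (Fin n) ℝ) = 1 :=
    Unitary.coe_star_mul_self hA.eigenvectorUnitary
  have hc1 : (Matrix.diagonal eig).charpoly = (Aᵀ * A).charpoly := by
    rw [my_charpoly_diagonal, Matrix.IsHermitian.charpoly_eq hA]
    simp [eig]
  have hms : (Finset.univ.val.map eig) = Finset.univ.val.map (fun j => g j * g j) :=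
    roots_eq_of_charpoly _ _ (hc1.trans hchar)
  have hperm0 : (List.ofFn eig).Perm (List.ofFn (fun j => g j * g j)) := by
    rw [← Multiset.coe_eq_coe]
    rw [← Fin.univ_val_map, ← Fin.univ_val_map]
    exact hms
  have hmapg : (List.ofFn (fun j : Fin n => g j * g j)).map Real.sqrt = List.ofFn g := by
    rw [List.map_ofFn]
    congr 1
    funext j
    exact Real.sqrt_mul_self (hg0 j)
  have hperm : ((List.ofFn eig).map Real.sqrt).Perm (List.ofFn g) := by
    rw [← hmapg]
    exact hperm0.map Real.sqrt
  have hp2 : (svList A).Perm (List.ofFn g) :=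
    (List.mergeSort_perm _ _).trans hperm
  haveI : Std.Antisymm (fun a b : ℝ => b ≤ a) := ⟨fun a b h1 h2 => le_antisymm h2 h1⟩
  have sorted1 : List.Pairwise (fun a b : ℝ => b ≤ a) (svList A) := by
    have h := List.pairwise_mergeSort (le := fun a b : ℝ => decide (b ≤ a))
      (fun a b c hab hbc => by simp_all; linarith)
      (fun a b => by simpa using le_total b a)
      ((List.ofFn eig).map Real.sqrt)
    exact h.imp (fun hd => of_decide_eq_true hd)
  have sorted2 : List.Pairwise (fun a b : ℝ => b ≤ a) (List.ofFn g) := by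
    rw [List.pairwise_ofFn]
    intro i j hij
    exact hganti i j hij.le
  exact hp2.eq_of_pairwise' sorted1 sorted2

end Aux

/-- Lemma 14: for the GSVD of B₀ under the metric M = XᵀX = NᵀN, the rank-k truncation
B_k satisfies ‖XB₀ − XB_k‖_F² = Σ_{j>k} d_j²(XB₀). -/
theorem gsvd_truncation_error {m n p r : ℕ}
    (X : Matrix (Fin m) (Fin p) ℝ) (N : Matrix (Fin p) (Fin p) ℝ)
    (hN : Xᵀ * X = Nᵀ * N)
    (B0 : Matrix (Fin p) (Fin n) ℝ) (hr : B0.rank = r)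
    (U : Matrix (Fin p) (Fin r) ℝ) (V : Matrix (Fin n) (Fin r) ℝ) (d : Fin r → ℝ)
    (hU : Uᵀ * (Xᵀ * X) * U = 1) (hV : Vᵀ * V = 1)
    (hd0 : ∀ j, 0 ≤ d j) (hmono : ∀ i j : Fin r, i ≤ j → d j ≤ d i)
    (hGSVD : N * B0 = N * (U * Matrix.diagonal d * Vᵀ))
    (k : ℕ) :
    frobSq (X * B0 - X * (U * Matrix.diagonal (fun j : Fin r => if (j : ℕ) < k then d j else 0) * Vᵀ))
      = ∑ j ∈ Finset.Icc (k + 1) n, (sv (X * B0) j) ^ 2 := by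
  -- r ≤ n
  have hrn : r ≤ n := by
    have h1 : (Vᵀ * V).rank = r := by rw [hV, Matrix.rank_one, Fintype.card_fin]
    have h2 : (Vᵀ * V).rank ≤ Vᵀ.rank := Matrix.rank_mul_le_left _ _
    have h3 : Vᵀ.rank ≤ Fintype.card (Fin n) := Matrix.rank_le_card_width _
    rw [h1, Fintype.card_fin] at *
    omega
  -- Step A : X * B0 = X * (U * diagonal d * Vᵀ)
  have hXB : X * B0 = X * (U * Matrix.diagonal d * Vᵀ) := by
    set Cm := B0 - U * Matrix.diagonal d * Vᵀ with hC
    have h0 : N * Cm = 0 := by rw [hC, Matrix.mul_sub, hGSVD, sub_self]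
    have h1 : (X * Cm)ᵀ * (X * Cm) = 0 := by
      calc (X * Cm)ᵀ * (X * Cm) = Cmᵀ * (Xᵀ * X) * Cm := by
            simp only [Matrix.transpose_mul, Matrix.mul_assoc]
        _ = Cmᵀ * (Nᵀ * N) * Cm := by rw [hN]
        _ = (N * Cm)ᵀ * (N * Cm) := by simp only [Matrix.transpose_mul, Matrix.mul_assoc]
        _ = 0 := by rw [h0]; simp
    have h2 : (X * Cm)ᴴ * (X * Cm) = 0 := by
      rwa [Matrix.conjTranspose_eq_transpose_of_trivial]
    have h3 : X * Cm = 0 := Matrix.conjTranspose_mul_self_eq_zero.mp h2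
    have h4 : X * B0 - X * (U * Matrix.diagonal d * Vᵀ) = 0 := by
      rw [← Matrix.mul_sub]; exact h3
    exact sub_eq_zero.mp h4
  -- LHS computation
  set e : Fin r → ℝ := fun j => if (j : ℕ) < k then 0 else d j with he
  have hLmat : X * B0 - X * (U * Matrix.diagonal (fun j : Fin r => if (j : ℕ) < k then d j else 0) * Vᵀ)
      = X * (U * Matrix.diagonal e * Vᵀ) := by
    rw [hXB, ← Matrix.mul_sub, ← Matrix.sub_mul, ← Matrix.mul_sub, Matrix.diagonal_sub]
    have hdd : (fun i : Fin r => d i - if (i : ℕ) < k then d i else 0) = e := by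
      funext j
      by_cases hj : (j : ℕ) < k <;> simp [he, hj]
    rw [hdd]
  have hLHS : frobSq (X * B0 - X * (U * Matrix.diagonal (fun j : Fin r => if (j : ℕ) < k then d j else 0) * Vᵀ))
      = ∑ j, e j ^ 2 := by
    rw [hLmat]
    exact frob_calc X U V hU hV e
  -- the decreasing padded singular value function
  set g : Fin n → ℝ := fun j => if h : (j : ℕ) < r then d ⟨j, h⟩ else 0 with hg
  have hg0 : ∀ j, 0 ≤ g j := by
    intro j
    by_cases h : (j : ℕ) < r <;> simp [hg, h, hd0]
  have hganti : ∀ i j : Fin n, i ≤ j → g j ≤ g i := by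
    intro i j hij
    by_cases hjr : (j : ℕ) < r
    · have hir : (i : ℕ) < r := lt_of_le_of_lt hij hjr
      simp only [hg, dif_pos hjr, dif_pos hir]
      exact hmono ⟨i, hir⟩ ⟨j, hjr⟩ hij
    · simp only [hg, dif_neg hjr]
      exact hg0 i
  -- charpoly identification
  have hchar : ((X * B0)ᵀ * (X * B0)).charpoly
      = (Matrix.diagonal (fun j : Fin n => g j * g j)).charpoly := by
    have hM0 : (X * B0)ᵀ * (X * B0) = V * Matrix.diagonal (fun a => d a * d a) * Vᵀ := by
      rw [hXB]; exact gram_eq X U V hU d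
    set J := Jmat hrn with hJ
    have hcan1 : ∀ {s : ℕ} (W : Matrix (Fin r) (Fin s) ℝ), J * ((J)ᵀ * W) = W := by
      intro s W
      rw [← Matrix.mul_assoc, JJT, Matrix.one_mul]
    have hcan2 : ∀ {s : ℕ} (W : Matrix (Fin r) (Fin s) ℝ), Vᵀ * (V * W) = W := by
      intro s W
      rw [← Matrix.mul_assoc, hV, Matrix.one_mul]
    set A' : Matrix (Fin n) (Fin n) ℝ := V * J with hA'
    set B' : Matrix (Fin n) (Fin n) ℝ := (Jᵀ * (Matrix.diagonal (fun a => d a * d a) * J)) * (Jᵀ * Vᵀ) with hB'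
    have hsplit : V * Matrix.diagonal (fun a => d a * d a) * Vᵀ = A' * B' := by
      rw [hA', hB']
      simp only [Matrix.mul_assoc]
      rw [hcan1, hcan1]
    have hBA : B' * A' = Matrix.diagonal (fun j : Fin n => if h : (j : ℕ) < r then d ⟨j, h⟩ * d ⟨j, h⟩ else 0) := by
      rw [hB', hA']
      simp only [Matrix.mul_assoc]
      rw [hcan2, hcan1]
      exact JDJ hrn d
    have hgg : (fun j : Fin n => g j * g j)
        = (fun j : Fin n => if h : (j : ℕ) < r then d ⟨j, h⟩ * d ⟨j, h⟩ else 0) := by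
      funext j
      by_cases h : (j : ℕ) < r <;> simp [hg, h]
    rw [hM0, hsplit, my_charpoly_mul_comm, hBA, hgg]
  have hsv : svList (X * B0) = List.ofFn g := svList_eq_of (X * B0) g hg0 hganti hchar
  -- sum manipulation
  set G : ℕ → ℝ := fun i => if h : i < r then (d ⟨i, h⟩) ^ 2 else 0 with hG
  have hgetD : ∀ i, i < n → ((List.ofFn g).getD i 0) ^ 2 = G i := by
    intro i hi
    have hlen : i < (List.ofFn g).length := by simpa using hi
    rw [List.getD_eq_getElem _ _ hlen, List.getElem_ofFn]
    by_cases h : i < r <;> simp [hg, hG, h]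
  -- RHS
  have hRHS : ∑ j ∈ Finset.Icc (k + 1) n, (sv (X * B0) j) ^ 2 = ∑ i ∈ Finset.Ico k n, G i := by
    rw [← Finset.Ico_add_one_right_eq_Icc, Finset.sum_Ico_eq_sum_range, Finset.sum_Ico_eq_sum_range]
    have hnk : n + 1 - (k + 1) = n - k := by omega
    rw [hnk]
    apply Finset.sum_congr rfl
    intro i hi
    rw [Finset.mem_range] at hi
    have hkin : k + i < n := by omega
    have hidx : k + 1 + i - 1 = k + i := by omega
    rw [sv, hsv, hidx, hgetD _ hkin]
  -- both sides equal the sum over Ico k r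
  have hRHS2 : ∑ i ∈ Finset.Ico k n, G i = ∑ i ∈ Finset.Ico k r, G i := by
    symm
    apply Finset.sum_subset (Finset.Ico_subset_Ico le_rfl hrn)
    intro x hx hnx
    rw [Finset.mem_Ico] at hx
    rw [Finset.mem_Ico, not_and] at hnx
    have : ¬ x < r := fun hc => (hnx hx.1) hc
    simp [hG, this]
  have hLHS2 : ∑ j, e j ^ 2 = ∑ i ∈ Finset.Ico k r, G i := by
    have hfun : ∀ j : Fin r, e j ^ 2 = (fun i : ℕ => if i < k then 0 else G i) (j : ℕ) := by
      intro j
      by_cases hj : (j : ℕ) < k <;> simp [he, hG, hj, j.isLt]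
    have step1 : ∑ j : Fin r, e j ^ 2 = ∑ i ∈ Finset.range r, (if i < k then (0:ℝ) else G i) := by
      rw [← Fin.sum_univ_eq_sum_range (fun i => if i < k then (0:ℝ) else G i) r]
      exact Finset.sum_congr rfl (fun j _ => hfun j)
    rw [step1]
    have : ∀ i : ℕ, (if i < k then (0:ℝ) else G i) = if ¬ i < k then G i else 0 := by
      intro i
      by_cases h : i < k <;> simp [h]
    rw [Finset.sum_congr rfl (fun i _ => this i), ← Finset.sum_filter]
    congr 1
    ext x
    simp only [Finset.mem_filter, Finset.mem_range, Finset.mem_Ico, Nat.not_lt]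
    omega
  rw [hLHS, hRHS, hRHS2, hLHS2]
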